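/- Let a, b, A, B, C ∈ ℝ. Then there exist ν₁, ν₂ ∈ ℝ such that for all θ ∈ ℝ: a·cos θ + b·sin θ + A·cos²θ + B·sin θ·cos θ + C·sin²θ = (A + C)/2 + √(a² + b²)·cos(θ − ν₁) + ½·√((A − C)² + B²)·cos(2(θ − ν₂)). Consequently, each univariate full conditional of the exponential-family extended multivariate von Mises distribution, whose log-density as a function of one angle θ is (up to an additive constant) of the above quadratic trigonometric form, is a generalized von Mises distribution of order two, with density proportional to exp{γ¹·cos(θ − ν¹) + γ²·cos(2(θ − ν²))}. -/

import Mathlib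

/-- Polar decomposition helper: any pair `(x, y)` equals `(r cos φ, r sin φ)`
with `r = √(x² + y²)`. -/
lemma polar_exists (x y : ℝ) :
    ∃ φ : ℝ, x = Real.sqrt (x ^ 2 + y ^ 2) * Real.cos φ ∧
      y = Real.sqrt (x ^ 2 + y ^ 2) * Real.sin φ := by
  by_cases h : (x, y) = (0, 0)
  · obtain ⟨hx, hy⟩ := Prod.mk.injEq .. ▸ h
    exact ⟨0, by simp [hx, hy]⟩
  · set z : ℂ := ⟨x, y⟩ with hz
    have hz0 : z ≠ 0 := by
      simp only [Prod.mk.injEq, not_and_or] at h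
      rcases h with h | h <;> intro hc <;> apply h
      · exact congrArg Complex.re hc
      · exact congrArg Complex.im hc
    have habs : ‖z‖ = Real.sqrt (x ^ 2 + y ^ 2) := by
      rw [Complex.norm_def, Complex.normSq_mk]; ring_nf
    have habs0 : ‖z‖ ≠ 0 := by simpa using hz0
    refine ⟨Complex.arg z, ?_, ?_⟩
    · rw [Complex.cos_arg hz0, habs]
      field_simp [habs ▸ habs0]
      rfl
    · rw [Complex.sin_arg, habs]
      field_simp [habs ▸ habs0]
      rfl

theorem stmt_10 (a b A B C : ℝ) :
    ∃ ν₁ ν₂ : ℝ, ∀ θ : ℝ,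
      a * Real.cos θ + b * Real.sin θ + A * Real.cos θ ^ 2 +
        B * (Real.sin θ * Real.cos θ) + C * Real.sin θ ^ 2 =
      (A + C) / 2 + Real.sqrt (a ^ 2 + b ^ 2) * Real.cos (θ - ν₁) +
        (1 / 2) * Real.sqrt ((A - C) ^ 2 + B ^ 2) * Real.cos (2 * (θ - ν₂)) := by
  obtain ⟨ν₁, ha, hb⟩ := polar_exists a b
  obtain ⟨φ, hAC, hB⟩ := polar_exists (A - C) B
  refine ⟨ν₁, φ / 2, fun θ => ?_⟩
  have h2 : 2 * (θ - φ / 2) = 2 * θ - φ := by ring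
  rw [Real.cos_sub, h2, Real.cos_sub, Real.cos_two_mul, Real.sin_two_mul]
  have hpyth := Real.sin_sq_add_cos_sq θ
  linear_combination Real.cos θ * ha + Real.sin θ * hb + (Real.cos θ ^ 2 - 1/2) * hAC + (Real.sin θ * Real.cos θ) * hB + C * hpyth
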